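/- Let H be a quasi-Hopf algebra with invertible antipode S and let M be an object of the bimodule category ^#_H M (left H-modules, with V▷M = V^#⊗M and M◁V = M⊗V). Then natural transformations τ: (−)▷M → M◁(−) are in bijection with k-linear maps ρ: M → M⊗H, written ρ(m) = m⟨0⟩⊗m⟨1⟩, satisfying h¹m⟨0⟩ ⊗ h²m⟨1⟩ = (h²m)⟨0⟩ ⊗ (h²m)⟨1⟩S²(h¹) for all h ∈ H, m ∈ M. The bijection sends τ to ρ(m) = τ_H(1⊗m), and conversely ρ to τ_V(v⊗m) = m⟨0⟩ ⊗ m⟨1⟩v. -/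

import Mathlib

open TensorProduct

noncomputable section

/-- A quasi-bialgebra over a field `k`. -/
structure QuasiBialgebra (k H : Type) [Field k] [Ring H] [Algebra k H] where
  comul : H →ₐ[k] H ⊗[k] H
  counit : H →ₐ[k] k
  assocEl : (H ⊗[k] (H ⊗[k] H))ˣ
  counit_left : ∀ a : H,
    (Algebra.TensorProduct.lid k H)
      ((Algebra.TensorProduct.map counit (AlgHom.id k H)) (comul a)) = a
  counit_right : ∀ a : H,
    (Algebra.TensorProduct.rid k k H)
      ((Algebra.TensorProduct.map (AlgHom.id k H) counit) (comul a)) = a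
  quasi_coassoc : ∀ a : H,
    (Algebra.TensorProduct.map (AlgHom.id k H) comul) (comul a)
      = (assocEl : H ⊗[k] (H ⊗[k] H))
        * (Algebra.TensorProduct.assoc k k k H H H)
            ((Algebra.TensorProduct.map comul (AlgHom.id k H)) (comul a))
        * ((assocEl⁻¹ : (H ⊗[k] (H ⊗[k] H))ˣ) : H ⊗[k] (H ⊗[k] H))
  counit_mid_assocEl :
    (Algebra.TensorProduct.map (AlgHom.id k H)
      (((Algebra.TensorProduct.lid k H).toAlgHom).comp
        (Algebra.TensorProduct.map counit (AlgHom.id k H))))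
      (assocEl : H ⊗[k] (H ⊗[k] H)) = 1
  pentagon :
    (Algebra.TensorProduct.map (AlgHom.id k H)
       (Algebra.TensorProduct.map (AlgHom.id k H) comul))
      (assocEl : H ⊗[k] (H ⊗[k] H))
    * (Algebra.TensorProduct.assoc k k k H H (H ⊗[k] H))
        ((Algebra.TensorProduct.map comul (AlgHom.id k (H ⊗[k] H)))
          (assocEl : H ⊗[k] (H ⊗[k] H)))
    = (Algebra.TensorProduct.includeRight (R := k) (A := H)
        (assocEl : H ⊗[k] (H ⊗[k] H)))
      * (Algebra.TensorProduct.map (AlgHom.id k H)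
           (Algebra.TensorProduct.assoc k k k H H H).toAlgHom)
          ((Algebra.TensorProduct.map (AlgHom.id k H)
             (Algebra.TensorProduct.map comul (AlgHom.id k H)))
            (assocEl : H ⊗[k] (H ⊗[k] H)))
      * (Algebra.TensorProduct.map (AlgHom.id k H)
           (Algebra.TensorProduct.assoc k k k H H H).toAlgHom)
          ((Algebra.TensorProduct.assoc k k k H (H ⊗[k] H) H)
            ((Algebra.TensorProduct.includeLeft (R := k) (S := k))
              (assocEl : H ⊗[k] (H ⊗[k] H))))

/-- A quasi-Hopf algebra over a field `k`, with invertible antipode. -/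
structure QuasiHopf (k H : Type) [Field k] [Ring H] [Algebra k H]
    extends QuasiBialgebra k H where
  S : H →ₗ[k] H
  S_one : S 1 = 1
  S_mul : ∀ a b : H, S (a * b) = S b * S a
  S_bij : Function.Bijective S
  alpha : H
  beta : H
  antipode_left : ∀ h : H,
    ((LinearMap.mul' k H).comp
      (TensorProduct.map ((LinearMap.mulRight k alpha).comp S) LinearMap.id))
      (comul h) = counit h • alpha
  antipode_right : ∀ h : H,
    ((LinearMap.mul' k H).comp
      (TensorProduct.map LinearMap.id ((LinearMap.mulLeft k beta).comp S)))
      (comul h) = counit h • beta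
  phi_antipode :
    ((LinearMap.mul' k H).comp ((LinearMap.mul' k H).lTensor H))
      ((TensorProduct.map LinearMap.id
        (TensorProduct.map ((LinearMap.mulLeft k beta).comp S)
          (LinearMap.mulLeft k alpha)))
        (assocEl : H ⊗[k] (H ⊗[k] H))) = 1
  phiInv_antipode :
    ((LinearMap.mul' k H).comp ((LinearMap.mul' k H).lTensor H))
      ((TensorProduct.map S
        (TensorProduct.map (LinearMap.mulLeft k alpha)
          (LinearMap.mulLeft k beta)))
        (((assocEl⁻¹ : (H ⊗[k] (H ⊗[k] H))ˣ) : H ⊗[k] (H ⊗[k] H)))) = 1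

variable {k H : Type} [Field k] [Ring H] [Algebra k H]

/-- The diagonal action map of `H` on the tensor product of two `H`-modules
(given by representations into `Module.End`): `h · (m ⊗ n) = h¹ m ⊗ h² n`.
A priori this is only a linear map into the endomorphisms. -/
def QuasiBialgebra.tAct (Q : QuasiBialgebra k H) {M N : Type}
    [AddCommGroup M] [Module k M] [AddCommGroup N] [Module k N]
    (f : H →ₗ[k] Module.End k M) (g : H →ₗ[k] Module.End k N) :
    H →ₗ[k] Module.End k (M ⊗[k] N) :=
  (TensorProduct.homTensorHomMap (RingHom.id k) M N M N).comp
    ((TensorProduct.map f g).comp Q.comul.toLinearMap)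

/-- The componentwise action of an element of `H ⊗ (H ⊗ H)` on `M ⊗ (N ⊗ L)`. -/
def actTriple {M N L : Type}
    [AddCommGroup M] [Module k M] [AddCommGroup N] [Module k N]
    [AddCommGroup L] [Module k L]
    (f : H →ₗ[k] Module.End k M) (g : H →ₗ[k] Module.End k N)
    (e : H →ₗ[k] Module.End k L) :
    H ⊗[k] (H ⊗[k] H) →ₗ[k] Module.End k (M ⊗[k] (N ⊗[k] L)) :=
  (TensorProduct.homTensorHomMap (RingHom.id k) M (N ⊗[k] L) M (N ⊗[k] L)).comp
    (TensorProduct.map f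
      ((TensorProduct.homTensorHomMap (RingHom.id k) N L N L).comp
        (TensorProduct.map g e)))

/-- The trivial representation of `H` on `k`, via the counit. -/
def QuasiBialgebra.trivRep (Q : QuasiBialgebra k H) :
    H →ₐ[k] Module.End k k :=
  (Algebra.lmul k k).comp Q.counit

/-- Equivariance of a linear map with respect to two (linear) actions of `H`. -/
def LinEquivariant {k H : Type} [Field k] [Ring H] [Algebra k H]
    {V W : Type} [AddCommGroup V] [Module k V] [AddCommGroup W] [Module k W]
    (ρV : H →ₗ[k] Module.End k V) (ρW : H →ₗ[k] Module.End k W)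
    (f : V →ₗ[k] W) : Prop :=
  ∀ (h : H) (v : V), f (ρV h v) = ρW h (f v)

/-- The left internal Hom action of `H` on `Hom_k(M,N)`:
`(h · φ)(m) = h¹ φ(S(h²) m)`. -/
def QuasiHopf.homLAct (Qh : QuasiHopf k H) {M N : Type}
    [AddCommGroup M] [Module k M] [AddCommGroup N] [Module k N]
    (ρM : H →ₐ[k] Module.End k M) (ρN : H →ₐ[k] Module.End k N) :
    H →ₗ[k] Module.End k (M →ₗ[k] N) :=
  (TensorProduct.lift
    (LinearMap.mk₂ k
      (fun a b => (LinearMap.llcomp k M N N (ρN a)).comp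
          (LinearMap.lcomp k N (ρM (Qh.S b))))
      (fun a a' b => by ext φ m; simp [map_add]
      )
      (fun c a b => by ext φ m; simp [map_smul]
      )
      (fun a b b' => by ext φ m; simp [map_add]
      )
      (fun c a b => by ext φ m; simp [map_smul]
      ))).comp Qh.comul.toLinearMap

/-- The right internal Hom action of `H` on `Hom_k(M,N)`:
`(h · φ)(m) = h² φ(S⁻¹(h¹) m)`, where `Sinv` is the inverse of the antipode. -/
def QuasiHopf.homRAct (Qh : QuasiHopf k H) (Sinv : H →ₗ[k] H) {M N : Type}
    [AddCommGroup M] [Module k M] [AddCommGroup N] [Module k N]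
    (ρM : H →ₐ[k] Module.End k M) (ρN : H →ₐ[k] Module.End k N) :
    H →ₗ[k] Module.End k (M →ₗ[k] N) :=
  (TensorProduct.lift
    (LinearMap.mk₂ k
      (fun a b => (LinearMap.llcomp k M N N (ρN b)).comp
          (LinearMap.lcomp k N (ρM (Sinv a))))
      (fun a a' b => by ext φ m; simp [map_add]
      )
      (fun c a b => by ext φ m; simp [map_smul]
      )
      (fun a b b' => by ext φ m; simp [map_add]
      )
      (fun c a b => by ext φ m; simp [map_smul]
      ))).comp Qh.comul.toLinearMap

/-- `S²` as an algebra endomorphism of a quasi-Hopf algebra. -/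
def QuasiHopf.S2 (Qh : QuasiHopf k H) : H →ₐ[k] H where
  toFun h := Qh.S (Qh.S h)
  map_one' := by simp [Qh.S_one]
  map_mul' a b := by simp [Qh.S_mul]
  map_zero' := by simp
  map_add' a b := by simp
  commutes' c := by
    simp [Algebra.algebraMap_eq_smul_one, map_smul, Qh.S_one]

/-- The `#`-twist of a module: the same underlying space, with the action
`h · v = S²(h) v`. -/
def QuasiHopf.hashRep (Qh : QuasiHopf k H) {V : Type}
    [AddCommGroup V] [Module k V]
    (ρV : H →ₐ[k] Module.End k V) : H →ₐ[k] Module.End k V :=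
  ρV.comp Qh.S2

open Finset in
/-- The type-I anti-Yetter–Drinfeld compatibility condition
`h¹ m⟨0⟩ ⊗ h² m⟨1⟩ = (h² m)⟨0⟩ ⊗ (h² m)⟨1⟩ S²(h¹)`, expressed using arbitrary
finite decompositions of the coproduct. -/
def QuasiHopf.CompatI (Qh : QuasiHopf k H) {M : Type}
    [AddCommGroup M] [Module k M]
    (ρM : H →ₐ[k] Module.End k M) (coact : M →ₗ[k] M ⊗[k] H) : Prop :=
  ∀ (h : H) (m : M) (ι : Type) (s : Finset ι) (h1 h2 : ι → H),
    Qh.comul h = ∑ i ∈ s, h1 i ⊗ₜ[k] h2 i →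
    ∑ i ∈ s, (TensorProduct.map (ρM (h1 i)) (LinearMap.mulLeft k (h2 i)))
        (coact m)
      = ∑ i ∈ s,
          (LinearMap.lTensor M
            (LinearMap.mulRight k (Qh.S (Qh.S (h1 i)))))
            (coact (ρM (h2 i) m))

/-- The family of maps `τ_V : V^# ⊗ M → M ⊗ V`, `v ⊗ m ↦ m⟨0⟩ ⊗ m⟨1⟩ v`,
associated to a coaction `ρ : M → M ⊗ H`. -/
def QuasiHopf.tauOfCoact (Qh : QuasiHopf k H) {M : Type}
    [AddCommGroup M] [Module k M] (coact : M →ₗ[k] M ⊗[k] H)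
    (V : Type) [AddCommGroup V] [Module k V]
    (ρV : H →ₐ[k] Module.End k V) : V ⊗[k] M →ₗ[k] M ⊗[k] V :=
  TensorProduct.lift
    (LinearMap.mk₂ k
      (fun v m =>
        (LinearMap.lTensor M ((ρV.toLinearMap :
            H →ₗ[k] V →ₗ[k] V).flip v)) (coact m))
      (fun v v' m => by
        simp [map_add, LinearMap.lTensor_add, LinearMap.add_apply])
      (fun c v m => by
        simp [map_smul, LinearMap.lTensor_smul, LinearMap.smul_apply])
      (fun v m m' => by simp [map_add])
      (fun c v m => by simp [map_smul]))

/-- The coaction `m ↦ τ_H(1 ⊗ m)` associated to a centralizing family `τ`. -/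
def QuasiHopf.coactOfTau (Qh : QuasiHopf k H) {M : Type}
    [AddCommGroup M] [Module k M]
    (τ : ∀ (V : Type) [AddCommGroup V] [Module k V],
      (H →ₐ[k] Module.End k V) → (V ⊗[k] M →ₗ[k] M ⊗[k] V)) :
    M →ₗ[k] M ⊗[k] H :=
  (τ H (Algebra.lmul k H)).comp ((TensorProduct.mk k H M) 1)

/-- A family `τ_V : V ▷ M → M ◁ V` (with `V ▷ M = V^# ⊗ M`, `M ◁ V = M ⊗ V`)
is a natural transformation: each component is `H`-equivariant, and the family
is natural in `V`. -/
def QuasiHopf.IsCentralFam (Qh : QuasiHopf k H) {M : Type}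
    [AddCommGroup M] [Module k M] (ρM : H →ₐ[k] Module.End k M)
    (τ : ∀ (V : Type) [AddCommGroup V] [Module k V],
      (H →ₐ[k] Module.End k V) → (V ⊗[k] M →ₗ[k] M ⊗[k] V)) : Prop :=
  (∀ (V : Type) [AddCommGroup V] [Module k V]
      (ρV : H →ₐ[k] Module.End k V),
    LinEquivariant (Qh.tAct (Qh.hashRep ρV).toLinearMap ρM.toLinearMap)
      (Qh.tAct ρM.toLinearMap ρV.toLinearMap) (τ V ρV)) ∧
  (∀ (V : Type) [AddCommGroup V] [Module k V]
      (ρV : H →ₐ[k] Module.End k V)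
      (W : Type) [AddCommGroup W] [Module k W]
      (ρW : H →ₐ[k] Module.End k W)
      (f : V →ₗ[k] W),
    LinEquivariant ρV.toLinearMap ρW.toLinearMap f →
    (τ W ρW).comp (LinearMap.rTensor M f)
      = (LinearMap.lTensor M f).comp (τ V ρV))

section Aux

variable {M V : Type} [AddCommGroup M] [Module k M] [AddCommGroup V] [Module k V]

lemma aux_tAct_eq_sum (Q : QuasiBialgebra k H) {N : Type}
    [AddCommGroup N] [Module k N]
    (f : H →ₗ[k] Module.End k M) (g : H →ₗ[k] Module.End k N)
    (h : H) {ι : Type} (s : Finset ι) (h1 h2 : ι → H)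
    (hd : Q.comul h = ∑ i ∈ s, h1 i ⊗ₜ[k] h2 i) :
    Q.tAct f g h = ∑ i ∈ s, TensorProduct.map (f (h1 i)) (g (h2 i)) := by
  simp [QuasiBialgebra.tAct, hd, map_sum]

lemma aux_tauOfCoact_tmul (Qh : QuasiHopf k H) (coact : M →ₗ[k] M ⊗[k] H)
    (ρV : H →ₐ[k] Module.End k V) (v : V) (m : M) :
    Qh.tauOfCoact coact V ρV (v ⊗ₜ[k] m)
      = LinearMap.lTensor M
          ((ρV.toLinearMap : H →ₗ[k] V →ₗ[k] V).flip v) (coact m) := rfl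

lemma aux_E_mulLeft (ρM : H →ₐ[k] Module.End k M) (ρV : H →ₐ[k] Module.End k V)
    (v : V) (a b : H) (x : M ⊗[k] H) :
    LinearMap.lTensor M ((ρV.toLinearMap : H →ₗ[k] V →ₗ[k] V).flip v)
      (TensorProduct.map (ρM a) (LinearMap.mulLeft k b) x)
      = TensorProduct.map (ρM a) (ρV b)
          (LinearMap.lTensor M ((ρV.toLinearMap : H →ₗ[k] V →ₗ[k] V).flip v) x) := by
  induction x using TensorProduct.induction_on with
  | zero => simp
  | tmul m c => simp [map_mul, Module.End.mul_apply]
  | add x y hx hy => simp [map_add, hx, hy]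

lemma aux_E_mulRight (ρV : H →ₐ[k] Module.End k V) (v : V) (c : H) (x : M ⊗[k] H) :
    LinearMap.lTensor M ((ρV.toLinearMap : H →ₗ[k] V →ₗ[k] V).flip v)
      (LinearMap.lTensor M (LinearMap.mulRight k c) x)
      = LinearMap.lTensor M
          ((ρV.toLinearMap : H →ₗ[k] V →ₗ[k] V).flip (ρV c v)) x := by
  induction x using TensorProduct.induction_on with
  | zero => simp
  | tmul m a => simp [map_mul, Module.End.mul_apply]
  | add x y hx hy => simp [map_add, hx, hy]

lemma aux_lmul_flip (a : H) :
    (((Algebra.lmul k H).toLinearMap : H →ₗ[k] H →ₗ[k] H).flip a)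
      = LinearMap.mulRight k a := by
  ext b; simp

lemma aux_lmul_mulLeft (b : H) :
    ((Algebra.lmul k H) b : Module.End k H) = LinearMap.mulLeft k b := by
  ext c; simp

lemma aux_hashRep_apply (Qh : QuasiHopf k H) (ρV : H →ₐ[k] Module.End k V) (a : H) :
    Qh.hashRep ρV a = ρV (Qh.S (Qh.S a)) := rfl

end Aux

/-- Lemma 4.1. For a quasi-Hopf algebra `H` and a left
`H`-module `M`, natural transformations `τ : (−) ▷ M → M ◁ (−)` are in
bijection with `k`-linear maps `ρ : M → M ⊗ H` satisfying
`h¹ m⟨0⟩ ⊗ h² m⟨1⟩ = (h² m)⟨0⟩ ⊗ (h² m)⟨1⟩ S²(h¹)`; the bijection sends `τ`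
to `ρ(m) = τ_H(1 ⊗ m)`, and conversely `ρ` to `τ_V(v ⊗ m) = m⟨0⟩ ⊗ m⟨1⟩ v`. -/
theorem central_families_biject_with_typeI_coactions
    (M : Type) [AddCommGroup M] [Module k M]
    (Qh : QuasiHopf k H) (ρM : H →ₐ[k] Module.End k M) :
    (∀ τ : ∀ (V : Type) [AddCommGroup V] [Module k V],
        (H →ₐ[k] Module.End k V) → (V ⊗[k] M →ₗ[k] M ⊗[k] V),
      Qh.IsCentralFam ρM τ →
        Qh.CompatI ρM (Qh.coactOfTau τ) ∧
        ∀ (V : Type) [AddCommGroup V] [Module k V]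
          (ρV : H →ₐ[k] Module.End k V),
          τ V ρV = Qh.tauOfCoact (Qh.coactOfTau τ) V ρV) ∧
    (∀ coact : M →ₗ[k] M ⊗[k] H,
      Qh.CompatI ρM coact →
        Qh.IsCentralFam ρM (fun V _ _ ρV => Qh.tauOfCoact coact V ρV) ∧
        Qh.coactOfTau (fun V _ _ ρV => Qh.tauOfCoact coact V ρV) = coact) := by

  constructor
  · -- From a central family to a type-I coaction
    intro τ hτ
    obtain ⟨hEq, hNat⟩ := hτ
    have hτeq : ∀ (V : Type) [AddCommGroup V] [Module k V]
        (ρV : H →ₐ[k] Module.End k V),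
        τ V ρV = Qh.tauOfCoact (Qh.coactOfTau τ) V ρV := by
      intro V _ _ ρV
      apply TensorProduct.ext'
      intro v m
      have hf : LinEquivariant (Algebra.lmul k H).toLinearMap ρV.toLinearMap
          ((ρV.toLinearMap : H →ₗ[k] V →ₗ[k] V).flip v) := by
        intro h a
        simp [map_mul, Module.End.mul_apply]
      have key := congrArg (fun F => F ((1:H) ⊗ₜ[k] m))
        (hNat H (Algebra.lmul k H) V ρV _ hf)
      simp only [LinearMap.comp_apply, LinearMap.rTensor_tmul] at key
      have h1 : ((ρV.toLinearMap : H →ₗ[k] V →ₗ[k] V).flip v) 1 = v := by simp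
      rw [h1] at key
      rw [aux_tauOfCoact_tmul]
      exact key
    refine ⟨?_, hτeq⟩
    intro h m ι s h1 h2 hd
    have he := hEq H (Algebra.lmul k H) h ((1:H) ⊗ₜ[k] m)
    rw [aux_tAct_eq_sum Qh.toQuasiBialgebra _ _ h s h1 h2 hd,
        aux_tAct_eq_sum Qh.toQuasiBialgebra _ _ h s h1 h2 hd,
        hτeq H (Algebra.lmul k H)] at he
    simp only [LinearMap.sum_apply, TensorProduct.map_tmul, map_sum,
      AlgHom.toLinearMap_apply, aux_hashRep_apply, aux_lmul_mulLeft,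
      aux_tauOfCoact_tmul, aux_lmul_flip] at he
    have hcoact : Qh.tauOfCoact (Qh.coactOfTau τ) H (Algebra.lmul k H)
        ((1:H) ⊗ₜ[k] m) = Qh.coactOfTau τ m := by
      rw [← hτeq H (Algebra.lmul k H)]; rfl
    rw [aux_tauOfCoact_tmul, aux_lmul_flip] at hcoact
    simp only [LinearMap.mulLeft_apply, mul_one] at he
    rw [hcoact] at he
    exact he.symm
  · -- From a type-I coaction to a central family
    intro coact hcompat
    constructor
    · constructor
      · -- equivariance of each component
        intro V _ _ ρV h x
        obtain ⟨s, hs⟩ := TensorProduct.exists_finset (Qh.comul h)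
        rw [aux_tAct_eq_sum Qh.toQuasiBialgebra _ _ h s Prod.fst Prod.snd hs,
            aux_tAct_eq_sum Qh.toQuasiBialgebra _ _ h s Prod.fst Prod.snd hs]
        have hc := hcompat h
        induction x using TensorProduct.induction_on with
        | zero => simp
        | add x y hx hy => simp only [map_add, hx, hy]
        | tmul v m =>
          simp only [LinearMap.sum_apply, TensorProduct.map_tmul, map_sum,
            AlgHom.toLinearMap_apply, aux_hashRep_apply, aux_tauOfCoact_tmul]
          have compat := hcompat h m (H × H) s Prod.fst Prod.snd hs
          calc ∑ i ∈ s,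
              LinearMap.lTensor M ((ρV.toLinearMap : H →ₗ[k] V →ₗ[k] V).flip
                ((ρV (Qh.S (Qh.S i.1))) v)) (coact ((ρM i.2) m))
              = ∑ i ∈ s,
                LinearMap.lTensor M ((ρV.toLinearMap : H →ₗ[k] V →ₗ[k] V).flip v)
                  ((LinearMap.lTensor M (LinearMap.mulRight k (Qh.S (Qh.S i.1))))
                    (coact ((ρM i.2) m))) := by
                simp only [aux_E_mulRight]
            _ = LinearMap.lTensor M ((ρV.toLinearMap : H →ₗ[k] V →ₗ[k] V).flip v)
                  (∑ i ∈ s, (LinearMap.lTensor M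
                    (LinearMap.mulRight k (Qh.S (Qh.S i.1))))
                    (coact ((ρM i.2) m))) := by rw [map_sum]
            _ = LinearMap.lTensor M ((ρV.toLinearMap : H →ₗ[k] V →ₗ[k] V).flip v)
                  (∑ i ∈ s, (TensorProduct.map (ρM i.1)
                    (LinearMap.mulLeft k i.2)) (coact m)) := by rw [← compat]
            _ = ∑ i ∈ s, TensorProduct.map ((ρM i.1)) ((ρV i.2))
                  (LinearMap.lTensor M
                    ((ρV.toLinearMap : H →ₗ[k] V →ₗ[k] V).flip v) (coact m)) := by
                rw [map_sum]; simp only [aux_E_mulLeft]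
      · -- naturality
        intro V _ _ ρV W _ _ ρW f hf
        apply TensorProduct.ext'
        intro v m
        simp only [LinearMap.comp_apply, LinearMap.rTensor_tmul,
          aux_tauOfCoact_tmul]
        have hmap : ((ρW.toLinearMap : H →ₗ[k] W →ₗ[k] W).flip (f v))
            = f ∘ₗ ((ρV.toLinearMap : H →ₗ[k] V →ₗ[k] V).flip v) := by
          ext a
          simp only [LinearMap.flip_apply, LinearMap.comp_apply,
            AlgHom.toLinearMap_apply]
          exact (hf a v).symm
        rw [hmap, LinearMap.lTensor_comp, LinearMap.comp_apply]
    · -- round trip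
      ext m
      show Qh.tauOfCoact coact H (Algebra.lmul k H) ((1:H) ⊗ₜ[k] m) = coact m
      rw [aux_tauOfCoact_tmul, aux_lmul_flip]
      have : LinearMap.mulRight k (1:H) = LinearMap.id := by ext; simp
      rw [this, LinearMap.lTensor_id, LinearMap.id_apply]
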